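/- Let A ∈ M_n(K) with dim K[A] = n and suppose e_{i_0} is a cyclic vector for A. Then there is a unique basis B = {b_0,...,b_{n-1}} of K[A] with b_{i_0} = 1 and A·b_j = Σ_i a_{i,j} b_i for all j, and this basis satisfies b_i(e_{i_0}) = e_i for all i. Moreover the structure constants in b_i b_j = Σ_k c_{i,j}^k b_k are precisely the entries of the j-th column of the matrix b_i, and the j-th column of b_i equals the i-th column of b_j. -/

import Mathlib

/-- Let `A ∈ M_n(K)` with `dim K[A] = n` and suppose `e i₀` is a cyclic vector for `A`.
Then there is a unique basis `b` of `K[A]` with `b i₀ = 1` and `A·b j = ∑ i, A i j • b i`;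
it satisfies `b i (e i₀) = e i` for all `i`, the structure constants in
`b i * b j = ∑ k, c i j k • b k` are the entries of the `j`-th column of `b i`
(`c i j k = (b i) k j`), and the `j`-th column of `b i` equals the `i`-th column of `b j`. -/
theorem cyclic_vector_basis_properties
    {K : Type*} [Field K] (n : ℕ) (i₀ : Fin n)
    (A : Matrix (Fin n) (Fin n) K)
    (hdim : LinearIndependent K fun i : Fin n => A ^ (i : ℕ))
    (hcyc₁ : LinearIndependent K
      fun j : Fin n => (A ^ (j : ℕ)).mulVec (Pi.single i₀ 1))
    (hcyc₂ : Submodule.span K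
      (Set.range fun j : Fin n => (A ^ (j : ℕ)).mulVec (Pi.single i₀ 1)) = ⊤) :
    (∃! b : Fin n → Matrix (Fin n) (Fin n) K,
      (∀ i, b i ∈ Algebra.adjoin K {A}) ∧ LinearIndependent K b ∧
      b i₀ = 1 ∧ ∀ j, A * b j = ∑ i, A i j • b i) ∧
    ∀ b : Fin n → Matrix (Fin n) (Fin n) K,
      ((∀ i, b i ∈ Algebra.adjoin K {A}) ∧ LinearIndependent K b ∧
        b i₀ = 1 ∧ ∀ j, A * b j = ∑ i, A i j • b i) →
      (∀ i, (b i).mulVec (Pi.single i₀ 1) = Pi.single i 1) ∧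
      (∀ i j, b i * b j = ∑ k, (b i k j) • b k) ∧
      (∀ i j k, b i k j = b j k i) := by
  set v : Fin n → K := Pi.single i₀ 1 with hv
  set L : Matrix (Fin n) (Fin n) K →ₗ[K] (Fin n → K) :=
    { toFun := fun M => M.mulVec v
      map_add' := fun M N => Matrix.add_mulVec M N v
      map_smul' := fun c M => Matrix.smul_mulVec c M v } with hLdef
  have hLapp : ∀ M : Matrix (Fin n) (Fin n) K, L M = M.mulVec v := fun _ => rfl
  have hsumvec : ∀ (c : Fin n → K) (M : Fin n → Matrix (Fin n) (Fin n) K),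
      (∑ i, c i • M i).mulVec v = ∑ i, c i • (M i).mulVec v := by
    intro c M
    rw [← hLapp, map_sum]
    exact Finset.sum_congr rfl fun i _ => by rw [map_smul, hLapp]
  -- injectivity of M ↦ M *ᵥ v on the adjoin
  have hinj : ∀ M ∈ Algebra.adjoin K {A}, M.mulVec v = 0 → M = 0 := by
    intro M hM h0
    have hcomm : ∀ m : ℕ, M * A ^ m = A ^ m * M := fun m =>
      ((Algebra.commute_of_mem_adjoin_self hM).symm.pow_right m).eq
    have hker : ∀ x : Fin n → K, M.mulVec x = 0 := by
      have hsub : Set.range (fun j : Fin n => (A ^ (j : ℕ)).mulVec v) ⊆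
          (LinearMap.ker M.mulVecLin : Set (Fin n → K)) := by
        rintro _ ⟨j, rfl⟩
        simp only [SetLike.mem_coe, LinearMap.mem_ker, Matrix.mulVecLin_apply]
        rw [Matrix.mulVec_mulVec, hcomm, ← Matrix.mulVec_mulVec, h0,
          Matrix.mulVec_zero]
      have hle := Submodule.span_le.2 hsub
      rw [hcyc₂, top_le_iff] at hle
      intro x
      have hx : x ∈ LinearMap.ker M.mulVecLin := hle ▸ Submodule.mem_top
      simpa using hx
    ext i j
    simpa using congrFun (hker (Pi.single j 1)) i
  have hinj' : ∀ M ∈ Algebra.adjoin K {A}, ∀ N ∈ Algebra.adjoin K {A},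
      M.mulVec v = N.mulVec v → M = N := by
    intro M hM N hN h
    have h0 : (M - N).mulVec v = 0 := by rw [Matrix.sub_mulVec, h, sub_self]
    exact sub_eq_zero.mp (hinj (M - N) (sub_mem hM hN) h0)
  -- key: any `b` with the last two properties evaluates to the standard basis at `v`
  have hval : ∀ b : Fin n → Matrix (Fin n) (Fin n) K, b i₀ = 1 →
      (∀ j, A * b j = ∑ i, A i j • b i) →
      ∀ i, (b i).mulVec v = Pi.single i 1 := by
    intro b hb1 hbA
    set W : Matrix (Fin n) (Fin n) K := Matrix.of fun k j => (b j).mulVec v k with hW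
    have hWA : A * W = W * A := by
      ext k j
      calc (A * W) k j = (A.mulVec ((b j).mulVec v)) k := by
            simp [hW, Matrix.mul_apply, Matrix.mulVec, dotProduct]
        _ = ((A * b j).mulVec v) k := by rw [Matrix.mulVec_mulVec]
        _ = ((∑ i, A i j • b i).mulVec v) k := by rw [hbA]
        _ = (∑ i, A i j • (b i).mulVec v) k := by rw [hsumvec]
        _ = (W * A) k j := by
            simp [hW, Matrix.mul_apply, Finset.sum_apply, mul_comm]
    have hWv : W.mulVec v = v := by
      have h1 : W.mulVec v = (b i₀).mulVec v := by
        funext k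
        simp [hv, hW, Matrix.mulVec, dotProduct, Pi.single_apply]
      rw [h1, hb1, Matrix.one_mulVec]
    have hWid : ∀ x : Fin n → K, W.mulVec x = x := by
      have hsub' : Set.range (fun j : Fin n => (A ^ (j : ℕ)).mulVec v) ⊆
          (LinearMap.ker (W.mulVecLin - LinearMap.id) : Set (Fin n → K)) := by
        rintro _ ⟨j, rfl⟩
        have hc : W * A ^ (j : ℕ) = A ^ (j : ℕ) * W :=
          ((Commute.pow_right (hWA.symm : Commute W A) (j : ℕ))).eq
        simp only [SetLike.mem_coe, LinearMap.mem_ker, LinearMap.sub_apply,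
          Matrix.mulVecLin_apply, LinearMap.id_apply, sub_eq_zero]
        rw [Matrix.mulVec_mulVec, hc, ← Matrix.mulVec_mulVec, hWv]
      have hle := Submodule.span_le.2 hsub'
      rw [hcyc₂, top_le_iff] at hle
      intro x
      have hx : x ∈ LinearMap.ker (W.mulVecLin - LinearMap.id) := hle ▸ Submodule.mem_top
      simpa [sub_eq_zero] using hx
    intro i
    funext k
    have h2 := congrFun (hWid (Pi.single i 1)) k
    rw [Matrix.mulVec_single] at h2
    simpa [hW] using h2
  -- existence
  obtain ⟨b₀, hb₀mem, hb₀val⟩ :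
      ∃ b : Fin n → Matrix (Fin n) (Fin n) K,
        (∀ i, b i ∈ Algebra.adjoin K {A}) ∧
        (∀ i, (b i).mulVec v = Pi.single i 1) := by
    set B : Module.Basis (Fin n) K (Fin n → K) := Module.Basis.mk hcyc₁ (le_of_eq hcyc₂.symm) with hBdef
    refine ⟨fun i => ∑ j, (B.repr (Pi.single i 1)) j • A ^ (j : ℕ), ?_, ?_⟩
    · intro i
      exact sum_mem fun j _ => Subalgebra.smul_mem _
        (pow_mem (Algebra.self_mem_adjoin_singleton K A) _) _
    · intro i
      rw [hsumvec]
      have hB : ∀ j : Fin n, (A ^ (j : ℕ)).mulVec v = B j := fun j => by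
        rw [hBdef, Module.Basis.mk_apply]
      simp_rw [hB]
      exact B.sum_repr (Pi.single i 1)
  have hb₀1 : b₀ i₀ = 1 := by
    refine hinj' _ (hb₀mem i₀) _ (one_mem _) ?_
    rw [hb₀val i₀, Matrix.one_mulVec]
  have hb₀A : ∀ j, A * b₀ j = ∑ i, A i j • b₀ i := by
    intro j
    refine hinj' _ (mul_mem (Algebra.self_mem_adjoin_singleton K A) (hb₀mem j)) _
      (sum_mem fun i _ => Subalgebra.smul_mem _ (hb₀mem i) _) ?_
    rw [← Matrix.mulVec_mulVec, hb₀val j, Matrix.mulVec_single, hsumvec]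
    funext k
    simp [hb₀val, Finset.sum_apply, Pi.single_apply]
  have hb₀li : LinearIndependent K b₀ := by
    have hli := (Pi.basisFun K (Fin n)).linearIndependent
    rw [show (⇑(Pi.basisFun K (Fin n))) = fun i => (Pi.single i 1 : Fin n → K)
      from funext fun i => Pi.basisFun_apply K (Fin n) i] at hli
    refine LinearIndependent.of_comp L ?_
    have hcomp : (L ∘ b₀) = fun i => (Pi.single i 1 : Fin n → K) := by
      funext i
      rw [Function.comp_apply, hLapp]
      exact hb₀val i
    rw [hcomp]; exact hli
  -- the "moreover" part for arbitrary b
  have hmore : ∀ b : Fin n → Matrix (Fin n) (Fin n) K,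
      ((∀ i, b i ∈ Algebra.adjoin K {A}) ∧ LinearIndependent K b ∧
        b i₀ = 1 ∧ ∀ j, A * b j = ∑ i, A i j • b i) →
      (∀ i, (b i).mulVec v = Pi.single i 1) ∧
      (∀ i j, b i * b j = ∑ k, (b i k j) • b k) ∧
      (∀ i j k, b i k j = b j k i) := by
    rintro b ⟨hmem, hli, h1, hA⟩
    have hbv := hval b h1 hA
    have hmul : ∀ i j, b i * b j = ∑ k, (b i k j) • b k := by
      intro i j
      refine hinj' _ (mul_mem (hmem i) (hmem j)) _
        (sum_mem fun k _ => Subalgebra.smul_mem _ (hmem k) _) ?_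
      rw [← Matrix.mulVec_mulVec, hbv j, Matrix.mulVec_single, hsumvec]
      funext k
      simp [hbv, Finset.sum_apply, Pi.single_apply]
    refine ⟨hbv, hmul, ?_⟩
    intro i j k
    have hc : b i * b j = b j * b i :=
      (Algebra.commute_of_mem_adjoin_singleton_of_commute (hmem j)
        (Algebra.commute_of_mem_adjoin_self (hmem i)).symm).eq
    have heq : ∑ l, (b i l j) • b l = ∑ l, (b j l i) • b l := by
      rw [← hmul i j, hc, hmul j i]
    have hz : ∑ l, ((b i l j) - (b j l i)) • b l = 0 := by
      simp only [sub_smul, Finset.sum_sub_distrib, heq, sub_self]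
    exact sub_eq_zero.mp (Fintype.linearIndependent_iff.mp hli _ hz k)
  constructor
  · refine ⟨b₀, ⟨hb₀mem, hb₀li, hb₀1, hb₀A⟩, ?_⟩
    intro b hb
    have h1 := hval b hb.2.2.1 hb.2.2.2
    funext i
    exact hinj' _ (hb.1 i) _ (hb₀mem i) (by rw [h1 i, hb₀val i])
  · exact hmore
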